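/- Let Y₁,…,Y_q be locally Lipschitz vector fields on ℝⁿ such that for every bounded open set Ω there is C_Ω > 0 with [Y_j, Y_k](x) ∈ P_x^{C_Ω} for almost every x ∈ Ω, where P_x^r = {Σ_j c_j Y_j(x) : |c| ≤ r}. Then there exist Lebesgue-measurable functions c_{jk}^i : ℝⁿ → ℝ with ‖c_{jk}‖_{L^∞(Ω)} ≤ C_Ω for all bounded open Ω, such that [Y_j,Y_k](x) = Σ_{i=1}^q c_{jk}^i(x) Y_i(x) for almost all x ∈ ℝⁿ and all j,k. -/

import Mathlib

open MeasureTheory Set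

noncomputable section

/-- a.e.-defined bracket of Lipschitz vector fields, `[Y_j,Y_k] = (Y_j g_k - Y_k g_j)·∇`. -/
def vbracket {n : ℕ} (f g : (Fin n → ℝ) → (Fin n → ℝ)) (x : Fin n → ℝ) : Fin n → ℝ :=
  fderiv ℝ g x (f x) - fderiv ℝ f x (g x)

namespace MSIaux

open Matrix Filter Topology

variable {n q : ℕ}

lemma dot_self_nonneg {m : ℕ} (v : Fin m → ℝ) : 0 ≤ v ⬝ᵥ v :=
  Finset.sum_nonneg fun _ _ => mul_self_nonneg _

lemma dot_eq_sum_sq {m : ℕ} (v : Fin m → ℝ) : v ⬝ᵥ v = ∑ i, v i ^ 2 := by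
  simp [dotProduct, sq]

lemma dot_self_eq_zero_iff {m : ℕ} {v : Fin m → ℝ} : v ⬝ᵥ v = 0 ↔ v = 0 :=
  dotProduct_self_eq_zero

/-- regularized least-squares solution `(MᵀM + εI)⁻¹ Mᵀ b`. -/
def lsSol (M : Matrix (Fin n) (Fin q) ℝ) (b : Fin n → ℝ) (ε : ℝ) : Fin q → ℝ :=
  (Mᵀ * M + ε • (1 : Matrix (Fin q) (Fin q) ℝ))⁻¹ *ᵥ (Mᵀ *ᵥ b)

lemma adjoint_dot (M : Matrix (Fin n) (Fin q) ℝ) (x : Fin q → ℝ) (y : Fin n → ℝ) :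
    x ⬝ᵥ (Mᵀ *ᵥ y) = (M *ᵥ x) ⬝ᵥ y := by
  rw [Matrix.dotProduct_mulVec, Matrix.vecMul_transpose]

lemma regMat_posDef (M : Matrix (Fin n) (Fin q) ℝ) {ε : ℝ} (hε : 0 < ε) :
    (Mᵀ * M + ε • (1 : Matrix (Fin q) (Fin q) ℝ)).PosDef := by
  rw [Matrix.posDef_iff_dotProduct_mulVec]
  constructor
  · ext i j
    simp [Matrix.conjTranspose_apply, Matrix.add_apply, Matrix.mul_apply, Matrix.one_apply,
      mul_comm, eq_comm]
  · intro x hx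
    have h1 : (Mᵀ * M + ε • (1 : Matrix (Fin q) (Fin q) ℝ)) *ᵥ x = Mᵀ *ᵥ (M *ᵥ x) + ε • x := by
      rw [Matrix.add_mulVec, Matrix.smul_mulVec, Matrix.one_mulVec, ← Matrix.mulVec_mulVec]
    rw [star_trivial, h1, dotProduct_add, adjoint_dot]
    have hx' : 0 < x ⬝ᵥ x :=
      lt_of_le_of_ne (dot_self_nonneg x) fun h => hx (dot_self_eq_zero_iff.mp h.symm)
    have h2 : x ⬝ᵥ (ε • x) = ε * (x ⬝ᵥ x) := by
      rw [dotProduct_smul, smul_eq_mul]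
    rw [h2]
    have := dot_self_nonneg (M *ᵥ x)
    nlinarith

lemma lsSol_spec (M : Matrix (Fin n) (Fin q) ℝ) (b : Fin n → ℝ) {ε : ℝ} (hε : 0 < ε) :
    (Mᵀ * M + ε • (1 : Matrix (Fin q) (Fin q) ℝ)) *ᵥ lsSol M b ε = Mᵀ *ᵥ b := by
  have hdet : IsUnit (Mᵀ * M + ε • (1 : Matrix (Fin q) (Fin q) ℝ)).det :=
    (regMat_posDef M hε).det_pos.ne'.isUnit
  rw [lsSol, Matrix.mulVec_mulVec, Matrix.mul_nonsing_inv _ hdet, Matrix.one_mulVec]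

lemma key_identity (M : Matrix (Fin n) (Fin q) ℝ) (b : Fin n → ℝ) {ε : ℝ} (hε : 0 < ε)
    (a : Fin q → ℝ) (ha : M *ᵥ a = b) :
    (M *ᵥ (a - lsSol M b ε)) ⬝ᵥ (M *ᵥ (a - lsSol M b ε))
      + ε * ((a - lsSol M b ε) ⬝ᵥ (a - lsSol M b ε))
      = ε * ((a - lsSol M b ε) ⬝ᵥ a) := by
  set c := lsSol M b ε with hc
  set N := Mᵀ * M + ε • (1 : Matrix (Fin q) (Fin q) ℝ) with hN
  have hNw : N *ᵥ (a - c) = ε • a := by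
    rw [Matrix.mulVec_sub, lsSol_spec M b hε, hN, Matrix.add_mulVec,
      Matrix.smul_mulVec, Matrix.one_mulVec, ← Matrix.mulVec_mulVec, ha]
    abel
  have h1 : (a - c) ⬝ᵥ (N *ᵥ (a - c)) = ε * ((a - c) ⬝ᵥ a) := by
    rw [hNw, dotProduct_smul, smul_eq_mul]
  have h2 : (a - c) ⬝ᵥ (N *ᵥ (a - c))
      = (M *ᵥ (a - c)) ⬝ᵥ (M *ᵥ (a - c)) + ε * ((a - c) ⬝ᵥ (a - c)) := by
    rw [hN, Matrix.add_mulVec, Matrix.smul_mulVec, Matrix.one_mulVec,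
      dotProduct_add, ← Matrix.mulVec_mulVec, adjoint_dot, dotProduct_smul,
      smul_eq_mul]
  rw [← h2, h1]

lemma dot_sub_expand {m : ℕ} (a c : Fin m → ℝ) :
    (a - c) ⬝ᵥ (a - c) = a ⬝ᵥ a - 2 * (a ⬝ᵥ c) + c ⬝ᵥ c := by
  have hcomm : c ⬝ᵥ a = a ⬝ᵥ c := dotProduct_comm c a
  rw [sub_dotProduct, dotProduct_sub, dotProduct_sub, hcomm]
  ring

lemma dot_sub_right {m : ℕ} (a c : Fin m → ℝ) :
    (a - c) ⬝ᵥ a = a ⬝ᵥ a - a ⬝ᵥ c := by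
  rw [sub_dotProduct, dotProduct_comm c a]

lemma cauchy_schwarz_dot {m : ℕ} (a c : Fin m → ℝ) :
    (a ⬝ᵥ c) ^ 2 ≤ (a ⬝ᵥ a) * (c ⬝ᵥ c) := by
  have h := Finset.sum_mul_sq_le_sq_mul_sq Finset.univ a c
  rw [dot_eq_sum_sq, dot_eq_sum_sq]
  simpa [dotProduct] using h

lemma lsSol_props (M : Matrix (Fin n) (Fin q) ℝ) (b : Fin n → ℝ) {ε : ℝ} (hε : 0 < ε)
    (a : Fin q → ℝ) (ha : M *ᵥ a = b) :
    ((a - lsSol M b ε) ⬝ᵥ (a - lsSol M b ε) ≤ (a - lsSol M b ε) ⬝ᵥ a) ∧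
    (lsSol M b ε ⬝ᵥ lsSol M b ε ≤ a ⬝ᵥ a) ∧
    ((M *ᵥ lsSol M b ε - b) ⬝ᵥ (M *ᵥ lsSol M b ε - b) ≤ ε * (a ⬝ᵥ a)) := by
  set c := lsSol M b ε with hc
  have hkey := key_identity M b hε a ha
  have hMw := dot_self_nonneg (M *ᵥ (a - c))
  have h1 : (a - c) ⬝ᵥ (a - c) ≤ (a - c) ⬝ᵥ a := by nlinarith
  have hac : c ⬝ᵥ c ≤ a ⬝ᵥ c := by
    have e1 := dot_sub_expand a c
    have e2 := dot_sub_right a c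
    nlinarith
  have hcs := cauchy_schwarz_dot a c
  have hcnn := dot_self_nonneg c
  have h2 : c ⬝ᵥ c ≤ a ⬝ᵥ a := by nlinarith [dot_self_nonneg a]
  refine ⟨h1, h2, ?_⟩
  have hres : M *ᵥ c - b = -(M *ᵥ (a - c)) := by
    rw [Matrix.mulVec_sub, ha]; abel
  have hresdot : (M *ᵥ c - b) ⬝ᵥ (M *ᵥ c - b) = (M *ᵥ (a - c)) ⬝ᵥ (M *ᵥ (a - c)) := by
    rw [hres, neg_dotProduct, dotProduct_neg, neg_neg]
  rw [hresdot]
  have e2 := dot_sub_right a c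
  have hwnn := dot_self_nonneg (a - c)
  nlinarith

lemma lsSol_coord_bound (M : Matrix (Fin n) (Fin q) ℝ) (b : Fin n → ℝ) {ε : ℝ} (hε : 0 < ε)
    (a : Fin q → ℝ) (ha : M *ᵥ a = b) (i : Fin q) :
    |lsSol M b ε i| ≤ Real.sqrt (a ⬝ᵥ a) := by
  have h2 := (lsSol_props M b hε a ha).2.1
  have hsq : (lsSol M b ε i) ^ 2 ≤ a ⬝ᵥ a := by
    have : (lsSol M b ε i) ^ 2 ≤ lsSol M b ε ⬝ᵥ lsSol M b ε := by
      rw [dot_eq_sum_sq]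
      exact Finset.single_le_sum (f := fun j => (lsSol M b ε j) ^ 2)
        (fun j _ => sq_nonneg _) (Finset.mem_univ i)
    linarith
  calc |lsSol M b ε i| = Real.sqrt ((lsSol M b ε i) ^ 2) := (Real.sqrt_sq_eq_abs _).symm
  _ ≤ Real.sqrt (a ⬝ᵥ a) := Real.sqrt_le_sqrt hsq

lemma continuous_dot {m : ℕ} : Continuous fun v : Fin m → ℝ => v ⬝ᵥ v := by
  unfold dotProduct
  exact continuous_finset_sum _ fun i _ => (continuous_apply i).mul (continuous_apply i)

lemma continuous_mulVec (M : Matrix (Fin n) (Fin q) ℝ) :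
    Continuous fun v : Fin q → ℝ => M *ᵥ v := by
  apply continuous_pi
  intro r
  unfold Matrix.mulVec dotProduct
  exact continuous_finset_sum _ fun i _ => (continuous_const.mul (continuous_apply i))

lemma continuous_dot2 {m : ℕ} : Continuous fun p : (Fin m → ℝ) × (Fin m → ℝ) => p.1 ⬝ᵥ p.2 := by
  unfold dotProduct
  exact continuous_finset_sum _ fun i _ =>
    ((continuous_apply i).comp continuous_fst).mul ((continuous_apply i).comp continuous_snd)

/-- The core convergence lemma: the regularized least-squares solutions converge to the
minimal-norm solution, whenever a solution exists. -/
lemma exists_tendsto_lsSol (M : Matrix (Fin n) (Fin q) ℝ) (b : Fin n → ℝ)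
    (hsol : ∃ a, M *ᵥ a = b) :
    ∃ cs : Fin q → ℝ, Tendsto (fun m : ℕ => lsSol M b (1 / (m + 1))) atTop (𝓝 cs) ∧
      M *ᵥ cs = b ∧ ∀ a, M *ᵥ a = b → cs ⬝ᵥ cs ≤ a ⬝ᵥ a := by
  obtain ⟨a, ha⟩ := hsol
  set u : ℕ → Fin q → ℝ := fun m => lsSol M b (1 / (m + 1)) with hu
  have hεpos : ∀ m : ℕ, (0 : ℝ) < 1 / (m + 1) := fun m => by positivity
  have hεlim : Tendsto (fun m : ℕ => (1 : ℝ) / (m + 1)) atTop (𝓝 0) :=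
    tendsto_one_div_add_atTop_nhds_zero_nat
  set R := Real.sqrt (a ⬝ᵥ a) with hR
  have hRnn : 0 ≤ R := Real.sqrt_nonneg _
  have hmem : ∀ m, u m ∈ Metric.closedBall (0 : Fin q → ℝ) R := by
    intro m
    rw [Metric.mem_closedBall, dist_zero_right]
    rw [pi_norm_le_iff_of_nonneg hRnn]
    intro i
    rw [Real.norm_eq_abs]
    exact lsSol_coord_bound M b (hεpos m) a ha i
  have limprop : ∀ φ : ℕ → ℕ, Tendsto φ atTop atTop → ∀ d : Fin q → ℝ,
      Tendsto (fun k => u (φ k)) atTop (𝓝 d) →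
      M *ᵥ d = b ∧ (∀ a', M *ᵥ a' = b → d ⬝ᵥ d ≤ a' ⬝ᵥ a') ∧
      (∀ a', M *ᵥ a' = b → (a' - d) ⬝ᵥ (a' - d) ≤ (a' - d) ⬝ᵥ a') := by
    intro φ hφ d hd
    have hε' : Tendsto (fun k => (1 : ℝ) / (φ k + 1)) atTop (𝓝 0) := hεlim.comp hφ
    constructor
    · have hcont : Continuous fun v : Fin q → ℝ => (M *ᵥ v - b) ⬝ᵥ (M *ᵥ v - b) :=
        continuous_dot.comp ((continuous_mulVec M).sub continuous_const)
      have hT : Tendsto (fun k => (M *ᵥ u (φ k) - b) ⬝ᵥ (M *ᵥ u (φ k) - b)) atTop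
          (𝓝 ((M *ᵥ d - b) ⬝ᵥ (M *ᵥ d - b))) := (hcont.tendsto d).comp hd
      have hub : Tendsto (fun k => (1 : ℝ) / (φ k + 1) * (a ⬝ᵥ a)) atTop (𝓝 0) := by
        simpa using hε'.mul_const (a ⬝ᵥ a)
      have hle : (M *ᵥ d - b) ⬝ᵥ (M *ᵥ d - b) ≤ 0 :=
        le_of_tendsto_of_tendsto' hT hub fun k => (lsSol_props M b (hεpos (φ k)) a ha).2.2
      have hz : (M *ᵥ d - b) ⬝ᵥ (M *ᵥ d - b) = 0 :=
        le_antisymm hle (dot_self_nonneg _)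
      have := dot_self_eq_zero_iff.mp hz
      rwa [sub_eq_zero] at this
    constructor
    · intro a' ha'
      have hT : Tendsto (fun k => u (φ k) ⬝ᵥ u (φ k)) atTop (𝓝 (d ⬝ᵥ d)) :=
        (continuous_dot.tendsto d).comp hd
      exact le_of_tendsto hT (Eventually.of_forall fun k =>
        (lsSol_props M b (hεpos (φ k)) a' ha').2.1)
    · intro a' ha'
      have hc1 : Continuous fun v : Fin q → ℝ => (a' - v) ⬝ᵥ (a' - v) :=
        continuous_dot.comp (continuous_const.sub continuous_id)
      have hc2 : Continuous fun v : Fin q → ℝ => (a' - v) ⬝ᵥ a' := by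
        have : Continuous fun v : Fin q → ℝ => ((a' - v), a') :=
          (continuous_const.sub continuous_id).prodMk continuous_const
        exact continuous_dot2.comp this
      exact le_of_tendsto_of_tendsto' ((hc1.tendsto d).comp hd) ((hc2.tendsto d).comp hd)
        fun k => (lsSol_props M b (hεpos (φ k)) a' ha').1
  have uniq : ∀ d₁ d₂ : Fin q → ℝ,
      (M *ᵥ d₁ = b ∧ (∀ a', M *ᵥ a' = b → (a' - d₁) ⬝ᵥ (a' - d₁) ≤ (a' - d₁) ⬝ᵥ a')) →
      (M *ᵥ d₂ = b ∧ (∀ a', M *ᵥ a' = b → (a' - d₂) ⬝ᵥ (a' - d₂) ≤ (a' - d₂) ⬝ᵥ a')) →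
      d₁ = d₂ := by
    intro d₁ d₂ ⟨h1s, h1m⟩ ⟨h2s, h2m⟩
    have e1 := h1m d₂ h2s
    have e2 := h2m d₁ h1s
    have x1 := dot_sub_expand d₂ d₁
    have x2 := dot_sub_expand d₁ d₂
    have y1 := dot_sub_right d₂ d₁
    have y2 := dot_sub_right d₁ d₂
    have hcomm : d₁ ⬝ᵥ d₂ = d₂ ⬝ᵥ d₁ := dotProduct_comm d₁ d₂
    have hz : (d₁ - d₂) ⬝ᵥ (d₁ - d₂) = 0 := by
      have hnn := dot_self_nonneg (d₁ - d₂)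
      have x3 := dot_sub_expand d₁ d₂
      nlinarith
    have := dot_self_eq_zero_iff.mp hz
    rwa [sub_eq_zero] at this
  obtain ⟨cs, -, φ₀, hφ₀mono, hφ₀lim⟩ :=
    tendsto_subseq_of_bounded Metric.isBounded_closedBall hmem
  have props₀ := limprop φ₀ hφ₀mono.tendsto_atTop cs hφ₀lim
  refine ⟨cs, ?_, props₀.1, props₀.2.1⟩
  apply tendsto_of_subseq_tendsto
  intro ns hns
  obtain ⟨d, -, ms, hmsmono, hmslim⟩ :=
    tendsto_subseq_of_bounded Metric.isBounded_closedBall (fun k => hmem (ns k))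
  have propsd := limprop (ns ∘ ms) (hns.comp hmsmono.tendsto_atTop) d hmslim
  have : d = cs := uniq d cs ⟨propsd.1, propsd.2.2⟩ ⟨props₀.1, props₀.2.2⟩
  exact ⟨ms, this ▸ hmslim⟩

section Meas

variable {α : Type*} [MeasurableSpace α]

lemma measurable_det {k : ℕ} (A : α → Matrix (Fin k) (Fin k) ℝ)
    (hA : ∀ i j, Measurable fun x => A x i j) : Measurable fun x => (A x).det := by
  simp_rw [Matrix.det_apply']
  exact Finset.measurable_sum _ fun σ _ =>
    measurable_const.mul (Finset.measurable_prod _ fun i _ => hA (σ i) i)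

lemma measurable_adjugate {k : ℕ} (A : α → Matrix (Fin k) (Fin k) ℝ)
    (hA : ∀ i j, Measurable fun x => A x i j) (i j : Fin k) :
    Measurable fun x => (A x).adjugate i j := by
  simp_rw [Matrix.adjugate_apply]
  apply measurable_det
  intro r s
  simp_rw [Matrix.updateRow_apply]
  by_cases h : r = j
  · simp [h]
  · simp [h]; exact hA r s

lemma measurable_inv_entry {k : ℕ} (A : α → Matrix (Fin k) (Fin k) ℝ)
    (hA : ∀ i j, Measurable fun x => A x i j) (i j : Fin k) :
    Measurable fun x => (A x)⁻¹ i j := by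
  simp_rw [Matrix.inv_def, Matrix.smul_apply, smul_eq_mul, Ring.inverse_eq_inv]
  exact ((measurable_det A hA).inv).mul (measurable_adjugate A hA i j)

lemma measurable_lsSol (M : α → Matrix (Fin n) (Fin q) ℝ) (b : α → Fin n → ℝ)
    (hM : ∀ r i, Measurable fun x => M x r i) (hb : ∀ r, Measurable fun x => b x r)
    (ε : ℝ) : Measurable fun x => lsSol (M x) (b x) ε := by
  apply measurable_pi_lambda
  intro i
  have hN : ∀ i' j',
      Measurable fun x => ((M x)ᵀ * M x + ε • (1 : Matrix (Fin q) (Fin q) ℝ)) i' j' := by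
    intro i' j'
    simp_rw [Matrix.add_apply, Matrix.mul_apply, Matrix.smul_apply, Matrix.transpose_apply]
    exact (Finset.measurable_sum _ fun r _ => (hM r i').mul (hM r j')).add measurable_const
  have hw : ∀ j', Measurable fun x => ((M x)ᵀ *ᵥ b x) j' := by
    intro j'
    simp_rw [Matrix.mulVec, dotProduct, Matrix.transpose_apply]
    exact Finset.measurable_sum _ fun r _ => (hM r j').mul (hb r)
  show Measurable fun x =>
    (((M x)ᵀ * M x + ε • (1 : Matrix (Fin q) (Fin q) ℝ))⁻¹ *ᵥ ((M x)ᵀ *ᵥ b x)) i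
  simp_rw [Matrix.mulVec, dotProduct]
  exact Finset.measurable_sum _ fun j _ =>
    (measurable_inv_entry _ hN i j).mul (hw j)

lemma measurable_vbracket (f g : (Fin n → ℝ) → (Fin n → ℝ))
    (hf : Continuous f) (hg : Continuous g) :
    Measurable fun x => vbracket f g x := by
  have h1 : Measurable fun x => fderiv ℝ g x (f x) :=
    (isBoundedBilinearMap_apply.continuous.measurable).comp
      ((measurable_fderiv ℝ g).prodMk hf.measurable)
  have h2 : Measurable fun x => fderiv ℝ f x (g x) :=
    (isBoundedBilinearMap_apply.continuous.measurable).comp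
      ((measurable_fderiv ℝ f).prodMk hg.measurable)
  exact h1.sub h2

end Meas

lemma mulVec_eq_sum {n q : ℕ} (v : Fin q → (Fin n → ℝ)) (c : Fin q → ℝ) :
    (Matrix.of fun r i => v i r) *ᵥ c = ∑ i, c i • v i := by
  funext r
  simp [Matrix.mulVec, dotProduct, Finset.sum_apply, mul_comm]

end MSIaux

open MSIaux Matrix Filter Topology in
theorem measurable_selection_involutivity (n q : ℕ)
    (Y : Fin q → (Fin n → ℝ) → (Fin n → ℝ))
    (hY : ∀ j, LocallyLipschitz (Y j))
    (hinv : ∀ Ω : Set (Fin n → ℝ), IsOpen Ω → Bornology.IsBounded Ω →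
      ∃ C > 0, ∀ᵐ x ∂(volume.restrict Ω),
        (∀ i, DifferentiableAt ℝ (Y i) x) ∧
        ∀ j k : Fin q, ∃ c : Fin q → ℝ, Real.sqrt (∑ i, c i ^ 2) ≤ C ∧
          vbracket (Y j) (Y k) x = ∑ i, c i • Y i x) :
    ∃ c : Fin q → Fin q → Fin q → (Fin n → ℝ) → ℝ,
      (∀ j k i, Measurable (c j k i)) ∧
      (∀ᵐ x ∂(volume : Measure (Fin n → ℝ)), ∀ j k : Fin q,
        vbracket (Y j) (Y k) x = ∑ i, c j k i x • Y i x) ∧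
      (∀ Ω : Set (Fin n → ℝ), IsOpen Ω → Bornology.IsBounded Ω →
        ∀ C : ℝ, 0 < C →
        (∀ᵐ x ∂(volume.restrict Ω),
          (∀ i, DifferentiableAt ℝ (Y i) x) ∧
          ∀ j k : Fin q, ∃ c' : Fin q → ℝ, Real.sqrt (∑ i, c' i ^ 2) ≤ C ∧
            vbracket (Y j) (Y k) x = ∑ i, c' i • Y i x) →
        ∀ᵐ x ∂(volume.restrict Ω), ∀ j k : Fin q,
          Real.sqrt (∑ i, c j k i x ^ 2) ≤ C) := by
  classical
  set Mf : (Fin n → ℝ) → Matrix (Fin n) (Fin q) ℝ :=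
    fun x => Matrix.of fun r i => Y i x r with hMf
  have hMfmeas : ∀ r i, Measurable fun x => Mf x r i := fun r i =>
    (measurable_pi_apply r).comp (hY i).continuous.measurable
  set bf : Fin q → Fin q → (Fin n → ℝ) → (Fin n → ℝ) :=
    fun j k x => vbracket (Y j) (Y k) x with hbf
  have hbfmeas : ∀ j k r, Measurable fun x => bf j k x r := fun j k r =>
    (measurable_pi_apply r).comp
      (measurable_vbracket (Y j) (Y k) (hY j).continuous (hY k).continuous)
  -- the approximating sequence
  set u : ℕ → (Fin n → ℝ) → (Fin q → Fin q → Fin q → ℝ) :=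
    fun m x j k => lsSol (Mf x) (bf j k x) (1 / (m + 1)) with hudef
  have humeas : ∀ m, Measurable (u m) := fun m =>
    measurable_pi_lambda _ fun j => measurable_pi_lambda _ fun k =>
      measurable_lsSol Mf (bf j k) hMfmeas (hbfmeas j k) _
  -- a.e. solvability on all of ℝⁿ
  have hsolv : ∀ᵐ x ∂(volume : Measure (Fin n → ℝ)),
      ∀ j k, ∃ a, Mf x *ᵥ a = bf j k x := by
    have H : ∀ m : ℕ, ∀ᵐ x ∂(volume : Measure (Fin n → ℝ)),
        x ∈ Metric.ball (0 : Fin n → ℝ) (m + 1) → ∀ j k, ∃ a, Mf x *ᵥ a = bf j k x := by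
      intro m
      obtain ⟨C, hCpos, hC⟩ :=
        hinv (Metric.ball (0 : Fin n → ℝ) (m + 1)) Metric.isOpen_ball Metric.isBounded_ball
      have h2 : ∀ᵐ x ∂(volume.restrict (Metric.ball (0 : Fin n → ℝ) (m + 1))),
          ∀ j k, ∃ a, Mf x *ᵥ a = bf j k x := by
        filter_upwards [hC] with x hx j k
        obtain ⟨c0, -, hc0⟩ := hx.2 j k
        exact ⟨c0, by rw [hMf, mulVec_eq_sum]; exact hc0.symm⟩
      exact (ae_restrict_iff' measurableSet_ball).1 h2
    rw [← ae_all_iff] at H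
    filter_upwards [H] with x hx
    obtain ⟨m, hm⟩ := exists_nat_gt (dist x (0 : Fin n → ℝ))
    exact hx m (Metric.mem_ball.2 (hm.trans (lt_add_one _)))
  -- a.e. convergence
  have hconv : ∀ᵐ x ∂(volume : Measure (Fin n → ℝ)),
      ∃ l, Tendsto (fun m => u m x) atTop (𝓝 l) := by
    filter_upwards [hsolv] with x hx
    choose cs hcs using fun j k => exists_tendsto_lsSol (Mf x) (bf j k x) (hx j k)
    refine ⟨fun j k => cs j k, ?_⟩
    rw [tendsto_pi_nhds]
    intro j
    rw [tendsto_pi_nhds]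
    exact fun k => (hcs j k).1
  obtain ⟨flim, hflim_meas, hflim_td⟩ :=
    measurable_limit_of_tendsto_metrizable_ae (fun m => (humeas m).aemeasurable) hconv
  -- a.e. the limit is the minimal-norm solution
  have hprop : ∀ᵐ x ∂(volume : Measure (Fin n → ℝ)), ∀ j k,
      Mf x *ᵥ flim x j k = bf j k x ∧
      ∀ a, Mf x *ᵥ a = bf j k x → flim x j k ⬝ᵥ flim x j k ≤ a ⬝ᵥ a := by
    filter_upwards [hsolv, hflim_td] with x hx htd
    intro j k
    obtain ⟨cs, hcs_td, hcs_sol, hcs_min⟩ := exists_tendsto_lsSol (Mf x) (bf j k x) (hx j k)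
    have hcomp : Tendsto (fun m => u m x j k) atTop (𝓝 (flim x j k)) :=
      tendsto_pi_nhds.mp (tendsto_pi_nhds.mp htd j) k
    have heq : flim x j k = cs := tendsto_nhds_unique hcomp hcs_td
    rw [heq]
    exact ⟨hcs_sol, hcs_min⟩
  refine ⟨fun j k i x => flim x j k i, ?_, ?_, ?_⟩
  · intro j k i
    exact (measurable_pi_apply i).comp
      ((measurable_pi_apply k).comp ((measurable_pi_apply j).comp hflim_meas))
  · filter_upwards [hprop] with x hx j k
    have h := (hx j k).1
    rw [hMf, mulVec_eq_sum] at h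
    exact h.symm
  · intro Ω hΩo hΩb C hCpos hae
    filter_upwards [ae_restrict_of_ae hprop, hae] with x hx hx2 j k
    obtain ⟨c', hc'le, hc'eq⟩ := hx2.2 j k
    have hsol' : Mf x *ᵥ c' = bf j k x := by
      rw [hMf, mulVec_eq_sum]; exact hc'eq.symm
    have hmin := (hx j k).2 c' hsol'
    have e1 : (∑ i, flim x j k i ^ 2) = flim x j k ⬝ᵥ flim x j k := (dot_eq_sum_sq _).symm
    have e2 : (∑ i, c' i ^ 2) = c' ⬝ᵥ c' := (dot_eq_sum_sq _).symm
    calc Real.sqrt (∑ i, flim x j k i ^ 2)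
        ≤ Real.sqrt (∑ i, c' i ^ 2) := by
          rw [e1, e2]; exact Real.sqrt_le_sqrt hmin
      _ ≤ C := hc'le
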